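/- Let E and F be real normed vector spaces, ω, λ ∈ (0,1), R' ≥ 1. Let φ : E → E satisfy φ(0) = 0 and ‖φ(y)‖ ≤ ω·‖y‖ for all ‖y‖ ≤ 1, and let B : ℕ → E → (F →L F) satisfy: B₀(y) = id for all y; B_{n+1}(y) = Bₙ(φ(y)) ∘ B₁(y) for all n and all ‖y‖ ≤ 1; ‖Bₙ(0)‖ ≤ R'·λⁿ for all n; and ‖B₁(y) − B₁(0)‖ ≤ R'·‖y‖ for all ‖y‖ ≤ 1. Then there exists R > 1 such that for all n ∈ ℕ and all y with ‖y‖ ≤ 1, ‖Bₙ(y) − Bₙ(0)‖ ≤ R·λⁿ·‖y‖. -/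

import Mathlib

/-- Claim (3.4) of §3.3: a Lipschitz-in-`y` exponential bound
`‖Bₙ(y) − Bₙ(0)‖ ≤ R λⁿ ‖y‖` uniform in `n` for the stable cocycle. -/
theorem cocycle_lipschitz_exponential_bound
    (E F : Type*) [NormedAddCommGroup E] [NormedSpace ℝ E]
    [NormedAddCommGroup F] [NormedSpace ℝ F]
    (ω lam R' : ℝ) (hω : ω ∈ Set.Ioo (0:ℝ) 1) (hlam : lam ∈ Set.Ioo (0:ℝ) 1)
    (hR' : 1 ≤ R')
    (φ : E → E) (hφ0 : φ 0 = 0) (hφ : ∀ y : E, ‖y‖ ≤ 1 → ‖φ y‖ ≤ ω * ‖y‖)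
    (B : ℕ → E → (F →L[ℝ] F))
    (hB0 : ∀ y : E, B 0 y = ContinuousLinearMap.id ℝ F)
    (hBrec : ∀ (n : ℕ) (y : E), ‖y‖ ≤ 1 → B (n + 1) y = (B n (φ y)).comp (B 1 y))
    (hBn0 : ∀ n : ℕ, ‖B n 0‖ ≤ R' * lam ^ n)
    (hB1 : ∀ y : E, ‖y‖ ≤ 1 → ‖B 1 y - B 1 0‖ ≤ R' * ‖y‖) :
    ∃ R : ℝ, 1 < R ∧ ∀ (n : ℕ) (y : E), ‖y‖ ≤ 1 →
      ‖B n y - B n 0‖ ≤ R * lam ^ n * ‖y‖ := by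
  obtain ⟨hω0, hω1⟩ := hω
  obtain ⟨hl0, hl1⟩ := hlam
  have hR'0 : (0:ℝ) < R' := lt_of_lt_of_le one_pos hR'
  set A : F →L[ℝ] F := B 1 0 with hA
  -- B n 0 = A ^ n
  have hApow : ∀ n, B n 0 = A ^ n := by
    intro n
    induction n with
    | zero => rw [hB0, pow_zero]; rfl
    | succ n ih =>
      have h := hBrec n 0 (by simp)
      rw [hφ0, ih] at h
      rw [h, pow_succ]
      rfl
  have hAn : ∀ n, ‖A ^ n‖ ≤ R' * lam ^ n := fun n => (hApow n) ▸ hBn0 n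
  set K : ℝ := R' ^ 2 / lam with hK
  have hKpos : 0 < K := by positivity
  set σ : ℕ → ℝ := fun n => ∑ j ∈ Finset.range n, ω ^ j with hσ
  have hσ0 : σ 0 = 0 := by simp [hσ]
  have hσnonneg : ∀ n, 0 ≤ σ n :=
    fun n => Finset.sum_nonneg (fun j _ => by positivity)
  have hσsucc : ∀ n, σ (n+1) = 1 + ω * σ n := by
    intro n
    simp only [hσ, geom_sum_succ]
    ring
  have hσle : ∀ n, σ n ≤ 1 / (1 - ω) := by
    intro n
    rw [le_div_iff₀ (by linarith)]
    have hgs : σ n * (ω - 1) = ω ^ n - 1 := geom_sum_mul ω n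
    nlinarith [pow_nonneg hω0.le n]
  -- key strengthened claim
  have key : ∀ n, ∀ z : E, ‖z‖ ≤ 1 → ∀ p : ℕ,
      ‖B n z * A ^ p‖ ≤ R' * lam ^ (n + p) * Real.exp (K * σ n * ‖z‖) ∧
      ‖(B n z - A ^ n) * A ^ p‖
        ≤ R' * lam ^ (n + p) * (Real.exp (K * σ n * ‖z‖) - 1) := by
    intro n
    induction n with
    | zero =>
      intro z _ p
      constructor
      · have h1 : B 0 z * A ^ p = A ^ p := by
          rw [hB0, ← ContinuousLinearMap.one_def, one_mul]
        rw [h1, hσ0]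
        simpa using hAn p
      · have h1 : B 0 z - A ^ 0 = 0 := by
          rw [hB0, pow_zero, ← ContinuousLinearMap.one_def, sub_self]
        rw [h1, hσ0]
        simp
    | succ n ih =>
      intro z hz p
      have hzn : (0:ℝ) ≤ ‖z‖ := norm_nonneg z
      have hφz : ‖φ z‖ ≤ ω * ‖z‖ := hφ z hz
      have hφz1 : ‖φ z‖ ≤ 1 := hφz.trans (by nlinarith)
      have ih1p := (ih (φ z) hφz1 (p+1)).1
      have ih2p := (ih (φ z) hφz1 (p+1)).2
      have ih0 := (ih (φ z) hφz1 0).1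
      have hBnφ : ‖B n (φ z)‖ ≤ R' * lam ^ n * Real.exp (K * σ n * ‖φ z‖) := by
        have h1 : B n (φ z) * A ^ 0 = B n (φ z) := by rw [pow_zero, mul_one]
        rw [h1, Nat.add_zero] at ih0
        exact ih0
      set Ez : F →L[ℝ] F := B 1 z - A with hEz
      have hEnorm : ‖Ez‖ ≤ R' * ‖z‖ := hB1 z hz
      have hB1z : B 1 z = A + Ez := by rw [hEz]; abel
      have hrec : B (n+1) z = B n (φ z) * B 1 z := hBrec n z hz
      -- abbreviations
      set X : ℝ := Real.exp (K * σ n * ‖φ z‖) with hX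
      have hXpos : 0 < X := Real.exp_pos _
      set Y : ℝ := Real.exp (K * (ω * σ n) * ‖z‖) with hY
      have hYpos : 0 < Y := Real.exp_pos _
      have hXY : X ≤ Y := by
        apply Real.exp_le_exp.2
        calc K * σ n * ‖φ z‖ ≤ K * σ n * (ω * ‖z‖) :=
              mul_le_mul_of_nonneg_left hφz (mul_nonneg hKpos.le (hσnonneg n))
          _ = K * (ω * σ n) * ‖z‖ := by ring
      have hCexp : 1 + K * ‖z‖ ≤ Real.exp (K * ‖z‖) := by
        have := Real.add_one_le_exp (K * ‖z‖); linarith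
      have hCpos : (0:ℝ) < Real.exp (K * ‖z‖) := Real.exp_pos _
      have hexp_target : Real.exp (K * σ (n+1) * ‖z‖)
          = Real.exp (K * ‖z‖) * Y := by
        rw [hY, ← Real.exp_add, hσsucc]
        ring_nf
      have hpowfact : R' ^ 3 * lam ^ (n + p) = R' * lam ^ (n + (p+1)) * K := by
        rw [hK]
        field_simp
        ring
      have hnormEA : ‖Ez * A ^ p‖ ≤ R' * ‖z‖ * (R' * lam ^ p) := by
        calc ‖Ez * A ^ p‖ ≤ ‖Ez‖ * ‖A ^ p‖ := norm_mul_le _ _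
          _ ≤ R' * ‖z‖ * (R' * lam ^ p) := by
              apply mul_le_mul hEnorm (hAn p) (norm_nonneg _) (by positivity)
      have hT2 : ‖B n (φ z) * (Ez * A ^ p)‖
          ≤ R' * lam ^ (n + (p+1)) * (K * ‖z‖ * X) := by
        calc ‖B n (φ z) * (Ez * A ^ p)‖ ≤ ‖B n (φ z)‖ * ‖Ez * A ^ p‖ :=
              norm_mul_le _ _
          _ ≤ (R' * lam ^ n * X) * (R' * ‖z‖ * (R' * lam ^ p)) := by
              apply mul_le_mul hBnφ hnormEA (norm_nonneg _) (by positivity)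
          _ = R' ^ 3 * lam ^ (n + p) * (‖z‖ * X) := by rw [pow_add]; ring
          _ = R' * lam ^ (n + (p+1)) * (K * ‖z‖ * X) := by rw [hpowfact]; ring
      have hexpsum : (n + 1) + p = n + (p + 1) := by omega
      constructor
      · -- first bound
        have hdec : B (n+1) z * A ^ p
            = B n (φ z) * A ^ (p+1) + B n (φ z) * (Ez * A ^ p) := by
          rw [hrec, hB1z, pow_succ']
          noncomm_ring
        rw [hexpsum, hdec]
        calc ‖B n (φ z) * A ^ (p+1) + B n (φ z) * (Ez * A ^ p)‖
            ≤ ‖B n (φ z) * A ^ (p+1)‖ + ‖B n (φ z) * (Ez * A ^ p)‖ :=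
              norm_add_le _ _
          _ ≤ R' * lam ^ (n + (p+1)) * X
              + R' * lam ^ (n + (p+1)) * (K * ‖z‖ * X) := add_le_add ih1p hT2
          _ = R' * lam ^ (n + (p+1)) * (X * (1 + K * ‖z‖)) := by ring
          _ ≤ R' * lam ^ (n + (p+1)) * (Real.exp (K * σ (n+1) * ‖z‖)) := by
              apply mul_le_mul_of_nonneg_left _ (by positivity)
              rw [hexp_target]
              calc X * (1 + K * ‖z‖) ≤ X * Real.exp (K * ‖z‖) :=
                    mul_le_mul_of_nonneg_left hCexp hXpos.le
                _ ≤ Y * Real.exp (K * ‖z‖) :=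
                    mul_le_mul_of_nonneg_right hXY hCpos.le
                _ = Real.exp (K * ‖z‖) * Y := by ring
      · -- second bound
        have hdec2 : (B (n+1) z - A ^ (n+1)) * A ^ p
            = B n (φ z) * (Ez * A ^ p) + (B n (φ z) - A ^ n) * A ^ (p+1) := by
          rw [hrec, hB1z, pow_succ' A p, pow_succ A n]
          noncomm_ring
        rw [hexpsum, hdec2]
        calc ‖B n (φ z) * (Ez * A ^ p) + (B n (φ z) - A ^ n) * A ^ (p+1)‖
            ≤ ‖B n (φ z) * (Ez * A ^ p)‖ + ‖(B n (φ z) - A ^ n) * A ^ (p+1)‖ :=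
              norm_add_le _ _
          _ ≤ R' * lam ^ (n + (p+1)) * (K * ‖z‖ * X)
              + R' * lam ^ (n + (p+1)) * (X - 1) := add_le_add hT2 ih2p
          _ = R' * lam ^ (n + (p+1)) * (X * (1 + K * ‖z‖) - 1) := by ring
          _ ≤ R' * lam ^ (n + (p+1)) * (Real.exp (K * σ (n+1) * ‖z‖) - 1) := by
              apply mul_le_mul_of_nonneg_left _ (by positivity)
              rw [hexp_target]
              have h1 : X * (1 + K * ‖z‖) ≤ Real.exp (K * ‖z‖) * Y := by
                calc X * (1 + K * ‖z‖) ≤ X * Real.exp (K * ‖z‖) :=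
                      mul_le_mul_of_nonneg_left hCexp hXpos.le
                  _ ≤ Y * Real.exp (K * ‖z‖) :=
                      mul_le_mul_of_nonneg_right hXY hCpos.le
                  _ = Real.exp (K * ‖z‖) * Y := by ring
              linarith
  -- assemble the final constant
  set M : ℝ := K * (1 / (1 - ω)) with hM
  have hMpos : 0 < M := by
    rw [hM]; have : (0:ℝ) < 1 - ω := by linarith
    positivity
  have hCpos : 0 < R' * M * Real.exp M := by positivity
  refine ⟨R' * M * Real.exp M + 1, by linarith, ?_⟩
  intro n y hy
  have hyn : (0:ℝ) ≤ ‖y‖ := norm_nonneg y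
  have hkey := (key n y hy 0).2
  have h1 : (B n y - A ^ n) * A ^ 0 = B n y - B n 0 := by
    rw [pow_zero, mul_one, hApow n]
  rw [h1, Nat.add_zero] at hkey
  set x : ℝ := K * σ n * ‖y‖ with hx
  have hx0 : 0 ≤ x := by
    rw [hx]; have := hσnonneg n; exact mul_nonneg (mul_nonneg hKpos.le this) hyn
  have hxM : x ≤ M * ‖y‖ := by
    rw [hx, hM]
    calc K * σ n * ‖y‖ ≤ K * (1 / (1 - ω)) * ‖y‖ := by
          apply mul_le_mul_of_nonneg_right _ hyn
          exact mul_le_mul_of_nonneg_left (hσle n) hKpos.le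
      _ = K * (1 / (1 - ω)) * ‖y‖ := rfl
  -- exp x - 1 ≤ x * exp x
  have hexp1 : Real.exp x - 1 ≤ x * Real.exp x := by
    have h4 := Real.add_one_le_exp (-x)
    have h5 : Real.exp (-x) * Real.exp x = 1 := by
      rw [← Real.exp_add]; simp
    nlinarith [Real.exp_pos x]
  have hxMM : x ≤ M := by nlinarith
  have hexp2 : Real.exp x ≤ Real.exp M := Real.exp_le_exp.2 hxMM
  have hlamn : (0:ℝ) < lam ^ n := by positivity
  calc ‖B n y - B n 0‖ ≤ R' * lam ^ n * (Real.exp x - 1) := hkey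
    _ ≤ R' * lam ^ n * (x * Real.exp x) := by
        apply mul_le_mul_of_nonneg_left hexp1 (by positivity)
    _ ≤ R' * lam ^ n * ((M * ‖y‖) * Real.exp M) := by
        apply mul_le_mul_of_nonneg_left _ (by positivity)
        apply mul_le_mul hxM hexp2 (Real.exp_pos x).le (by positivity)
    _ = (R' * M * Real.exp M) * lam ^ n * ‖y‖ := by ring
    _ ≤ (R' * M * Real.exp M + 1) * lam ^ n * ‖y‖ := by
        have h6 : (0:ℝ) ≤ lam ^ n * ‖y‖ := by positivity
        nlinarith
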